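/- Let T be a timed automaton over a product alphabet Σ_I × Σ_O and let T' be the deterministic timed automaton over the alphabet (Σ_I × Σ_O) × Δ obtained by making each input letter name the transition of T to take. If T is history-deterministic, then Player 2 wins the synthesis game for L(T) if and only if she wins the synthesis game for L(T'). -/

import Mathlib

open scoped NNReal

/-- Clock constraints (guards): Boolean combinations of `x ≤ n`, `x < n`,
`x − y ≤ n`, `x − y < n`. -/
inductive Guard (C : Type) where
  | tt : Guard C
  | le (x : C) (n : ℕ) : Guard C
  | lt (x : C) (n : ℕ) : Guard C
  | dle (x y : C) (n : ℕ) : Guard C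
  | dlt (x y : C) (n : ℕ) : Guard C
  | band (g₁ g₂ : Guard C) : Guard C
  | bnot (g : Guard C) : Guard C

/-- Satisfaction of a guard by a clock valuation. -/
def Guard.sat {C : Type} : Guard C → (C → ℝ≥0) → Prop
  | .tt, _ => True
  | .le x n, ν => (ν x : ℝ) ≤ n
  | .lt x n, ν => (ν x : ℝ) < n
  | .dle x y n, ν => (ν x : ℝ) - (ν y : ℝ) ≤ n
  | .dlt x y n, ν => (ν x : ℝ) - (ν y : ℝ) < n
  | .band g₁ g₂, ν => g₁.sat ν ∧ g₂.sat ν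
  | .bnot g, ν => ¬ g.sat ν

/-- The largest constant appearing in a guard in a constraint involving clock `z`. -/
def Guard.maxConst {C : Type} [DecidableEq C] : Guard C → C → ℕ
  | .tt, _ => 0
  | .le x n, z => if z = x then n else 0
  | .lt x n, z => if z = x then n else 0
  | .dle x y n, z => if z = x ∨ z = y then n else 0
  | .dlt x y n, z => if z = x ∨ z = y then n else 0
  | .band g₁ g₂, z => max (g₁.maxConst z) (g₂.maxConst z)
  | .bnot g, z => g.maxConst z

/-- A transition of a timed automaton: source, guard, letter, reset set, destination. -/
structure Tr (Q C A : Type) where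
  src : Q
  guard : Guard C
  letter : A
  reset : Set C
  dst : Q

/-- A timed automaton (the acceptance condition is kept as a separate parameter). -/
structure TA (Q C A : Type) where
  init : Q
  trans : Set (Tr Q C A)

namespace TA

variable {Q C A : Type}

/-- The valuation obtained from `ν` by resetting the clocks of transition `τ`. -/
noncomputable def resetVal (τ : Tr Q C A) (ν : C → ℝ≥0) : C → ℝ≥0 :=
  fun x => open Classical in if x ∈ τ.reset then 0 else ν x


/-- Timed words: infinite sequences of letters with strictly increasing timestamps. -/
def IsTimedWord (w : ℕ → A × ℝ≥0) : Prop :=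
  StrictMono fun n => (w n).2

/-- The delay elapsing before the `n`-th event of the timed word `w`. -/
noncomputable def delayAt (w : ℕ → A × ℝ≥0) (n : ℕ) : ℝ≥0 :=
  (w n).2 - (if n = 0 then 0 else (w (n - 1)).2)

/-- The configurations visited along the transition sequence `ρ` on the timed word `w`:
before each discrete step, time elapses up to the next timestamp. -/
noncomputable def configs (T : TA Q C A) (w : ℕ → A × ℝ≥0) (ρ : ℕ → Tr Q C A) :
    ℕ → Q × (C → ℝ≥0)
  | 0 => (T.init, fun _ => 0)
  | n + 1 => ((ρ n).dst, resetVal (ρ n) (fun x => (configs T w ρ n).2 x + delayAt w n))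

/-- `ρ` is a run of `T` on the timed word `w` from the initial configuration. -/
def IsRunOn (T : TA Q C A) (w : ℕ → A × ℝ≥0) (ρ : ℕ → Tr Q C A) : Prop :=
  ∀ n, ρ n ∈ T.trans ∧ (ρ n).letter = (w n).1 ∧ (ρ n).src = (T.configs w ρ n).1 ∧
    (ρ n).guard.sat (fun x => (T.configs w ρ n).2 x + delayAt w n)

/-- The timed language of `T` for the acceptance condition `Acc` on runs. -/
def Lang (T : TA Q C A) (Acc : (ℕ → Tr Q C A) → Prop) : Set (ℕ → A × ℝ≥0) :=
  {w | IsTimedWord w ∧ ∃ ρ, T.IsRunOn w ρ ∧ Acc ρ}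

/-- Safety acceptance: all states along the run stay in the safe set. -/
def safetyAcc (safe : Set Q) (ρ : ℕ → Tr Q C A) : Prop :=
  ∀ n, (ρ n).src ∈ safe ∧ (ρ n).dst ∈ safe

/-- Reachability acceptance: the run visits a state of the target set. -/
def reachAcc (F : Set Q) (ρ : ℕ → Tr Q C A) : Prop :=
  ∃ n, (ρ n).src ∈ F ∨ (ρ n).dst ∈ F

/-- The finite history (timed letters paired with chosen transitions) built by iterating
a candidate resolver `r` on the timed word `w`. -/
def histOf (r : List ((A × ℝ≥0) × Tr Q C A) → (A × ℝ≥0) → Tr Q C A)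
    (w : ℕ → A × ℝ≥0) : ℕ → List ((A × ℝ≥0) × Tr Q C A)
  | 0 => []
  | n + 1 => histOf r w n ++ [(w n, r (histOf r w n) (w n))]

/-- The run built by iterating the resolver `r` on the timed word `w`. -/
def runOf (r : List ((A × ℝ≥0) × Tr Q C A) → (A × ℝ≥0) → Tr Q C A)
    (w : ℕ → A × ℝ≥0) (n : ℕ) : Tr Q C A :=
  r (histOf r w n) (w n)

/-- `r` is a resolver for `T` with acceptance `Acc`. -/
def IsResolver (T : TA Q C A) (Acc : (ℕ → Tr Q C A) → Prop)
    (r : List ((A × ℝ≥0) × Tr Q C A) → (A × ℝ≥0) → Tr Q C A) : Prop :=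
  ∀ w ∈ T.Lang Acc, T.IsRunOn w (runOf r w) ∧ Acc (runOf r w)

/-- History-determinism: existence of a resolver. -/
def HD (T : TA Q C A) (Acc : (ℕ → Tr Q C A) → Prop) : Prop :=
  ∃ r, T.IsResolver Acc r

/-- Determinism: transitions from the same state over the same letter have mutually
exclusive guards. -/
def Deterministic (T : TA Q C A) : Prop :=
  ∀ τ₁ ∈ T.trans, ∀ τ₂ ∈ T.trans, τ₁.src = τ₂.src → τ₁.letter = τ₂.letter →
    τ₁ ≠ τ₂ → ∀ ν : C → ℝ≥0, ¬(τ₁.guard.sat ν ∧ τ₂.guard.sat ν)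

end TA

open scoped NNReal

namespace TA

variable {AI AO : Type}

/-- History of a synthesis play: Player 1 plays delays and input letters with strategy
`f`, Player 2 answers output letters with strategy `σ`. -/
def synHist (f : List (ℝ≥0 × AI × AO) → ℝ≥0 × AI)
    (σ : List (ℝ≥0 × AI × AO) → ℝ≥0 × AI → AO) : ℕ → List (ℝ≥0 × AI × AO)
  | 0 => []
  | n + 1 => synHist f σ n ++
      [((f (synHist f σ n)).1, (f (synHist f σ n)).2,
        σ (synHist f σ n) (f (synHist f σ n)))]

/-- The timed word over `AI × AO` produced in the synthesis game. -/
noncomputable def synWord (f : List (ℝ≥0 × AI × AO) → ℝ≥0 × AI)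
    (σ : List (ℝ≥0 × AI × AO) → ℝ≥0 × AI → AO) : ℕ → (AI × AO) × ℝ≥0 :=
  fun n => (((f (synHist f σ n)).2, σ (synHist f σ n) (f (synHist f σ n))),
    ∑ i ∈ Finset.range (n + 1), (f (synHist f σ i)).1)

/-- Time diverges along a timed word. -/
def NonZeno {A : Type} (w : ℕ → A × ℝ≥0) : Prop :=
  ∀ B : ℝ, ∃ n, B < ((w n).2 : ℝ)

/-- Player 2 wins the synthesis game for the timed language `L`: she has a strategy such
that against every Player-1 strategy the produced timed word is in `L`, or time does not
progress. -/
def P2WinsSynth (L : Set (ℕ → (AI × AO) × ℝ≥0)) : Prop :=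
  ∃ σ, ∀ f, synWord f σ ∈ L ∨ ¬ NonZeno (synWord f σ)

variable {Q C : Type}

/-- The determinized automaton `T'` over the alphabet `(AI × AO) × Δ`, in which each
input letter names the transition of `T` to take. -/
def primed (T : TA Q C (AI × AO)) : TA Q C ((AI × AO) × Tr Q C (AI × AO)) :=
  { init := T.init,
    trans := {τ' | ∃ τ ∈ T.trans,
      τ' = ⟨τ.src, τ.guard, (τ.letter, τ), τ.reset, τ.dst⟩} }

/-- The acceptance condition of `T'`, inherited from that of `T` through the named
transitions. -/
def primedAcc (Acc : (ℕ → Tr Q C (AI × AO)) → Prop)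
    (ρ' : ℕ → Tr Q C ((AI × AO) × Tr Q C (AI × AO))) : Prop :=
  Acc fun n => (ρ' n).letter.2

end TA


namespace Stmt17Aux

open TA

variable {Q C AI AO : Type}

/-- Project a primed history entry to an unprimed one. -/
def projE : (ℝ≥0 × AI × (AO × Tr Q C (AI × AO))) → ℝ≥0 × AI × AO :=
  fun x => (x.1, x.2.1, x.2.2.1)

/-- Lift an unprimed history to a primed one using `σ'` (with accumulator). -/
def liftGo (σ' : List (ℝ≥0 × AI × (AO × Tr Q C (AI × AO))) → ℝ≥0 × AI →
    AO × Tr Q C (AI × AO)) :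
    List (ℝ≥0 × AI × AO) → List (ℝ≥0 × AI × (AO × Tr Q C (AI × AO))) →
      List (ℝ≥0 × AI × (AO × Tr Q C (AI × AO)))
  | [], acc => acc
  | x :: rest, acc => liftGo σ' rest (acc ++ [(x.1, x.2.1, σ' acc (x.1, x.2.1))])

lemma liftGo_append (σ' : List (ℝ≥0 × AI × (AO × Tr Q C (AI × AO))) → ℝ≥0 × AI →
    AO × Tr Q C (AI × AO)) :
    ∀ (l : List (ℝ≥0 × AI × AO)) (x : ℝ≥0 × AI × AO) acc,
    liftGo σ' (l ++ [x]) acc =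
      liftGo σ' l acc ++ [(x.1, x.2.1, σ' (liftGo σ' l acc) (x.1, x.2.1))] := by
  intro l
  induction l with
  | nil => intro x acc; simp [liftGo]
  | cons y t ih => intro x acc; simp [liftGo, ih]

/-- Sum of the delays of a primed history. -/
def sumL (l : List (ℝ≥0 × AI × (AO × Tr Q C (AI × AO)))) : ℝ≥0 :=
  (l.map Prod.fst).sum

lemma sumL_append (l : List (ℝ≥0 × AI × (AO × Tr Q C (AI × AO)))) (x) :
    sumL (l ++ [x]) = sumL l + x.1 := by simp [sumL]

/-- Turn a primed history into a resolver history (with time and list accumulators). -/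
def toRGo : List (ℝ≥0 × AI × (AO × Tr Q C (AI × AO))) → ℝ≥0 →
    List (((AI × AO) × ℝ≥0) × Tr Q C (AI × AO)) →
      List (((AI × AO) × ℝ≥0) × Tr Q C (AI × AO))
  | [], _, acc => acc
  | x :: rest, t, acc =>
      toRGo rest (t + x.1) (acc ++ [(((x.2.1, x.2.2.1), t + x.1), x.2.2.2)])

lemma toRGo_append :
    ∀ (l : List (ℝ≥0 × AI × (AO × Tr Q C (AI × AO)))) (x) (t : ℝ≥0) acc,
    toRGo (l ++ [x]) t acc =
      toRGo l t acc ++ [(((x.2.1, x.2.2.1), t + sumL l + x.1), x.2.2.2)] := by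
  intro l
  induction l with
  | nil => intro x t acc; simp [toRGo, sumL]
  | cons y tl ih => intro x t acc; simp [toRGo, sumL, ih, add_assoc]

lemma delayAt_congr {A A' : Type} {w : ℕ → A × ℝ≥0} {w' : ℕ → A' × ℝ≥0}
    (ht : ∀ n, (w n).2 = (w' n).2) (n : ℕ) : TA.delayAt w n = TA.delayAt w' n := by
  unfold TA.delayAt
  rw [ht n]
  congr 1
  split <;> simp [ht]

lemma configs_congr {A A' : Type} (T : TA Q C A) (T' : TA Q C A')
    (w : ℕ → A × ℝ≥0) (w' : ℕ → A' × ℝ≥0) (ρ : ℕ → Tr Q C A) (ρ' : ℕ → Tr Q C A')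
    (hinit : T.init = T'.init) (ht : ∀ n, (w n).2 = (w' n).2)
    (hd : ∀ n, (ρ n).dst = (ρ' n).dst) (hrs : ∀ n, (ρ n).reset = (ρ' n).reset) :
    ∀ n, T.configs w ρ n = T'.configs w' ρ' n := by
  intro n
  induction n with
  | zero => simp [TA.configs, hinit]
  | succ n ih =>
    simp only [TA.configs]
    refine Prod.ext (hd n) ?_
    funext x
    simp only [TA.resetVal, ih, delayAt_congr ht n]
    rw [hrs n]

/-- Player 2 strategy in the primed game built from `σ` and a resolver `r`. -/
noncomputable def sigP
    (r : List (((AI × AO) × ℝ≥0) × Tr Q C (AI × AO)) → ((AI × AO) × ℝ≥0) →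
      Tr Q C (AI × AO))
    (σ : List (ℝ≥0 × AI × AO) → ℝ≥0 × AI → AO) :
    List (ℝ≥0 × AI × (AO × Tr Q C (AI × AO))) → ℝ≥0 × AI →
      AO × Tr Q C (AI × AO) :=
  fun h p => (σ (h.map projE) p,
    r (toRGo h 0 []) ((p.2, σ (h.map projE) p), sumL h + p.1))

end Stmt17Aux

/-- if `T` is history-deterministic, then Player 2 wins the synthesis game
for `L(T)` iff she wins the synthesis game for `L(T')`, where in the latter her output
also names the transition of `T` to take. -/
theorem stmt17 {Q C AI AO : Type} (T : TA Q C (AI × AO))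
    (Acc : (ℕ → Tr Q C (AI × AO)) → Prop) (hHD : T.HD Acc) :
    TA.P2WinsSynth (AI := AI) (AO := AO) (T.Lang Acc) ↔
    TA.P2WinsSynth (AI := AI) (AO := AO × Tr Q C (AI × AO))
      {w | (fun n => ((((w n).1.1, (w n).1.2.1), (w n).1.2.2), (w n).2)) ∈
        (TA.primed T).Lang (TA.primedAcc Acc)} := by
  classical
  constructor
  · rintro ⟨σ, hσ⟩
    obtain ⟨r, hr⟩ := hHD
    refine ⟨Stmt17Aux.sigP r σ, ?_⟩
    intro f'
    set σ' : List (ℝ≥0 × AI × (AO × Tr Q C (AI × AO))) → ℝ≥0 × AI →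
        AO × Tr Q C (AI × AO) := Stmt17Aux.sigP r σ with hσ'def
    set f : List (ℝ≥0 × AI × AO) → ℝ≥0 × AI :=
      fun h => f' (Stmt17Aux.liftGo σ' h []) with hfdef
    have key : ∀ n, Stmt17Aux.liftGo σ' (TA.synHist f σ n) [] = TA.synHist f' σ' n ∧
        (TA.synHist f' σ' n).map Stmt17Aux.projE = TA.synHist f σ n := by
      intro n
      induction n with
      | zero => simp [TA.synHist, Stmt17Aux.liftGo]
      | succ n ih =>
        obtain ⟨h1, h2⟩ := ih
        have hf : f (TA.synHist f σ n) = f' (TA.synHist f' σ' n) := by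
          rw [hfdef]; simp only; rw [h1]
        constructor
        · rw [TA.synHist, Stmt17Aux.liftGo_append, h1, TA.synHist, hf]
        · rw [TA.synHist, List.map_append, h2, TA.synHist]
          simp only [List.map_cons, List.map_nil, Stmt17Aux.projE, hσ'def,
            Stmt17Aux.sigP, h2, hf]
          rw [← hσ'def, h2]
    have hfh : ∀ n, f (TA.synHist f σ n) = f' (TA.synHist f' σ' n) := fun n => by
      rw [hfdef]; simp only; rw [(key n).1]
    have hb : ∀ n, (σ' (TA.synHist f' σ' n) (f' (TA.synHist f' σ' n))).1
        = σ (TA.synHist f σ n) (f (TA.synHist f σ n)) := fun n => by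
      rw [hσ'def]; simp only [Stmt17Aux.sigP]; rw [(key n).2, hfh n]
    have htime : ∀ n, (TA.synWord f' σ' n).2 = (TA.synWord f σ n).2 := fun n => by
      simp only [TA.synWord]
      exact Finset.sum_congr rfl (fun i _ => by rw [hfh i])
    have hsum : ∀ n, Stmt17Aux.sumL (TA.synHist f' σ' n) =
        ∑ i ∈ Finset.range n, (f' (TA.synHist f' σ' i)).1 := by
      intro n; induction n with
      | zero => simp [TA.synHist, Stmt17Aux.sumL]
      | succ n ih => rw [TA.synHist, Stmt17Aux.sumL_append, ih, Finset.sum_range_succ]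
    have haux : ∀ n, (((f' (TA.synHist f' σ' n)).2,
          σ ((TA.synHist f' σ' n).map Stmt17Aux.projE) (f' (TA.synHist f' σ' n))),
          Stmt17Aux.sumL (TA.synHist f' σ' n) + (f' (TA.synHist f' σ' n)).1)
        = TA.synWord f σ n := by
      intro n
      rw [(key n).2, ← hfh n, hsum n, TA.synWord]
      refine Prod.ext rfl ?_
      rw [Finset.sum_range_succ]
      simp only
      have hsc : (∑ i ∈ Finset.range n, (f (TA.synHist f σ i)).1)
          = ∑ i ∈ Finset.range n, (f' (TA.synHist f' σ' i)).1 :=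
        Finset.sum_congr rfl fun i _ => by rw [hfh i]
      rw [hsc]
    have hhist : ∀ n, Stmt17Aux.toRGo (TA.synHist f' σ' n) 0 [] =
        TA.histOf r (TA.synWord f σ) n := by
      intro n; induction n with
      | zero => simp [TA.synHist, Stmt17Aux.toRGo, TA.histOf]
      | succ n ih =>
        rw [TA.synHist, Stmt17Aux.toRGo_append, ih, TA.histOf]
        congr 1
        simp only [hσ'def, Stmt17Aux.sigP, zero_add]
        rw [ih, haux n]
    have htau : ∀ n, (TA.synWord f' σ' n).1.2.2 = TA.runOf r (TA.synWord f σ) n := by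
      intro n
      show (σ' (TA.synHist f' σ' n) (f' (TA.synHist f' σ' n))).2 = _
      rw [hσ'def]
      simp only [Stmt17Aux.sigP]
      rw [hhist n, haux n]
      rfl
    have hin : ∀ n, (TA.synWord f' σ' n).1.1 = (TA.synWord f σ n).1.1 := fun n => by
      simp only [TA.synWord]; rw [hfh n]
    have hout : ∀ n, (TA.synWord f' σ' n).1.2.1 = (TA.synWord f σ n).1.2 := fun n => by
      simp only [TA.synWord]; exact hb n
    rcases hσ f with hmem | hnz
    · left
      obtain ⟨hres1, hres2⟩ := hr _ hmem
      set w : ℕ → (AI × AO) × ℝ≥0 := TA.synWord f σ with hwdef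
      set ρ : ℕ → Tr Q C (AI × AO) := TA.runOf r w with hρdef
      simp only [Set.mem_setOf_eq, TA.Lang]
      have hc : ∀ n, (TA.primed T).configs
          (fun n => ((((TA.synWord f' σ' n).1.1, (TA.synWord f' σ' n).1.2.1),
            (TA.synWord f' σ' n).1.2.2), (TA.synWord f' σ' n).2))
          (fun n => ⟨(ρ n).src, (ρ n).guard, ((ρ n).letter, ρ n), (ρ n).reset,
            (ρ n).dst⟩) n = T.configs w ρ n :=
        Stmt17Aux.configs_congr _ _ _ _ _ _ rfl (fun n => htime n) (fun n => rfl)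
          (fun n => rfl)
      have hdel : ∀ n, TA.delayAt
          (fun n => ((((TA.synWord f' σ' n).1.1, (TA.synWord f' σ' n).1.2.1),
            (TA.synWord f' σ' n).1.2.2), (TA.synWord f' σ' n).2)) n
          = TA.delayAt w n :=
        fun n => Stmt17Aux.delayAt_congr (fun n => htime n) n
      refine ⟨?_, fun n => ⟨(ρ n).src, (ρ n).guard, ((ρ n).letter, ρ n),
        (ρ n).reset, (ρ n).dst⟩, ?_, ?_⟩
      · intro m n hmn
        show (TA.synWord f' σ' m).2 < (TA.synWord f' σ' n).2
        rw [htime m, htime n]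
        exact hmem.1 hmn
      · intro n
        refine ⟨⟨ρ n, (hres1 n).1, rfl⟩, ?_, ?_, ?_⟩
        · show ((ρ n).letter, ρ n) = (((TA.synWord f' σ' n).1.1,
            (TA.synWord f' σ' n).1.2.1), (TA.synWord f' σ' n).1.2.2)
          rw [hin n, hout n, htau n, (hres1 n).2.1]
        · show (ρ n).src = _
          rw [hc n]
          exact (hres1 n).2.2.1
        · show ((ρ n).guard).sat _
          simp only [hc n, hdel n]
          exact (hres1 n).2.2.2
      · exact hres2
    · right
      intro hNZ
      apply hnz
      intro B
      obtain ⟨n, hn⟩ := hNZ B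
      refine ⟨n, ?_⟩
      rw [← htime n]
      exact hn
  · rintro ⟨σ'0, hσ'⟩
    refine ⟨fun h p => (σ'0 (Stmt17Aux.liftGo σ'0 h []) p).1, ?_⟩
    intro f
    set σ' := σ'0 with hσ'def0
    set σ : List (ℝ≥0 × AI × AO) → ℝ≥0 × AI → AO :=
      fun h p => (σ' (Stmt17Aux.liftGo σ' h []) p).1 with hσdef
    set f' : List (ℝ≥0 × AI × (AO × Tr Q C (AI × AO))) → ℝ≥0 × AI :=
      fun h => f (h.map Stmt17Aux.projE) with hf'def
    have key : ∀ n, Stmt17Aux.liftGo σ' (TA.synHist f σ n) [] = TA.synHist f' σ' n ∧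
        (TA.synHist f' σ' n).map Stmt17Aux.projE = TA.synHist f σ n := by
      intro n
      induction n with
      | zero => simp [TA.synHist, Stmt17Aux.liftGo]
      | succ n ih =>
        obtain ⟨h1, h2⟩ := ih
        have hf : f' (TA.synHist f' σ' n) = f (TA.synHist f σ n) := by
          rw [hf'def]; simp only; rw [h2]
        constructor
        · rw [TA.synHist, Stmt17Aux.liftGo_append, h1, TA.synHist, hf]
        · rw [TA.synHist, List.map_append, h2, TA.synHist, hf]
          simp only [List.map_cons, List.map_nil, Stmt17Aux.projE, hσdef, h1]
          rw [← hσdef, h1]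
    have hfh : ∀ n, f' (TA.synHist f' σ' n) = f (TA.synHist f σ n) := fun n => by
      rw [hf'def]; simp only; rw [(key n).2]
    have hb : ∀ n, (σ' (TA.synHist f' σ' n) (f' (TA.synHist f' σ' n))).1
        = σ (TA.synHist f σ n) (f (TA.synHist f σ n)) := fun n => by
      rw [hσdef]; simp only; rw [(key n).1, hfh n]
    have htime : ∀ n, (TA.synWord f' σ' n).2 = (TA.synWord f σ n).2 := fun n => by
      simp only [TA.synWord]
      exact Finset.sum_congr rfl (fun i _ => by rw [hfh i])
    have hin : ∀ n, (TA.synWord f' σ' n).1.1 = (TA.synWord f σ n).1.1 := fun n => by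
      simp only [TA.synWord]; rw [hfh n]
    have hout : ∀ n, (TA.synWord f' σ' n).1.2.1 = (TA.synWord f σ n).1.2 := fun n => by
      simp only [TA.synWord]; exact hb n
    rcases hσ' f' with hmem | hnz
    · left
      simp only [Set.mem_setOf_eq, TA.Lang] at hmem
      obtain ⟨hTW, ρ', hrun, hAcc⟩ := hmem
      have hprim : ∀ n, (ρ' n).letter.2 ∈ T.trans ∧
          (ρ' n).src = (ρ' n).letter.2.src ∧ (ρ' n).guard = (ρ' n).letter.2.guard ∧
          (ρ' n).reset = (ρ' n).letter.2.reset ∧ (ρ' n).dst = (ρ' n).letter.2.dst ∧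
          (ρ' n).letter.1 = (ρ' n).letter.2.letter := by
        intro n
        obtain ⟨τ, hτT, hτeq⟩ := (hrun n).1
        rw [hτeq]
        exact ⟨hτT, rfl, rfl, rfl, rfl, rfl⟩
      have hc : ∀ n, T.configs (TA.synWord f σ) (fun n => (ρ' n).letter.2) n =
          (TA.primed T).configs (fun n => ((((TA.synWord f' σ' n).1.1,
            (TA.synWord f' σ' n).1.2.1), (TA.synWord f' σ' n).1.2.2),
            (TA.synWord f' σ' n).2)) ρ' n :=
        Stmt17Aux.configs_congr _ _ _ _ _ _ rfl (fun n => (htime n).symm)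
          (fun n => ((hprim n).2.2.2.2.1).symm) (fun n => ((hprim n).2.2.2.1).symm)
      have hdel : ∀ n, TA.delayAt (TA.synWord f σ) n = TA.delayAt
          (fun n => ((((TA.synWord f' σ' n).1.1, (TA.synWord f' σ' n).1.2.1),
            (TA.synWord f' σ' n).1.2.2), (TA.synWord f' σ' n).2)) n :=
        fun n => Stmt17Aux.delayAt_congr (fun n => (htime n).symm) n
      have hlet1 : ∀ n, (ρ' n).letter.1 = (TA.synWord f σ n).1 := by
        intro n
        have h := congrArg Prod.fst (hrun n).2.1
        simp only at h
        rw [h, hin n, hout n]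
      refine ⟨?_, fun n => (ρ' n).letter.2, ?_, ?_⟩
      · intro m n hmn
        show (TA.synWord f σ m).2 < (TA.synWord f σ n).2
        rw [← htime m, ← htime n]
        exact hTW hmn
      · intro n
        refine ⟨(hprim n).1, ?_, ?_, ?_⟩
        · show (ρ' n).letter.2.letter = _
          rw [← (hprim n).2.2.2.2.2]
          exact hlet1 n
        · show (ρ' n).letter.2.src = _
          rw [← (hprim n).2.1, (hrun n).2.2.1, ← hc n]
        · show ((ρ' n).letter.2.guard).sat _
          rw [← (hprim n).2.2.1]
          simp only [hc n, hdel n]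
          exact (hrun n).2.2.2
      · exact hAcc
    · right
      intro hNZ
      apply hnz
      intro B
      obtain ⟨n, hn⟩ := hNZ B
      refine ⟨n, ?_⟩
      rw [htime n]
      exact hn
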